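/- For all ω, φ in the piecewise polynomial space V_h^k (with periodic trace identification), L^−(ω,φ) + L^−(φ,ω) = Σ_{j=1}^N [ω]_{j+1/2} [φ]_{j+1/2}. -/

import Mathlib

open Polynomial Set

noncomputable section

namespace FW

variable {N : ℕ}

/-- Minus trace `ω⁻` at interface `j+1/2` (right end of cell `j`). -/
def trM (x : Fin (N + 1) → ℝ) (ω : Fin N → Polynomial ℝ) (j : Fin N) : ℝ :=
  (ω j).eval (x j.succ)

/-- Plus trace `ω⁺` at interface `j+1/2` (left end of the next cell, cyclically). -/
def trP [NeZero N] (x : Fin (N + 1) → ℝ) (ω : Fin N → Polynomial ℝ) (j : Fin N) : ℝ :=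
  (ω (j + 1)).eval (x (j + 1).castSucc)

/-- Average trace `{ω}`. -/
def trA [NeZero N] (x : Fin (N + 1) → ℝ) (ω : Fin N → Polynomial ℝ) (j : Fin N) : ℝ :=
  (trP x ω j + trM x ω j) / 2

/-- Jump `[ω]`. -/
def jmp [NeZero N] (x : Fin (N + 1) → ℝ) (ω : Fin N → Polynomial ℝ) (j : Fin N) : ℝ :=
  trP x ω j - trM x ω j

/-- Cell L² pairing `(u, φ)_{I_j}` of a piecewise polynomial with a test polynomial. -/
def ipj (x : Fin (N + 1) → ℝ) (u : Fin N → Polynomial ℝ) (j : Fin N) (φ : Polynomial ℝ) : ℝ :=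
  ∫ t in (x j.castSucc)..(x j.succ), (u j).eval t * φ.eval t

/-- Cell pairing `(f∘u, φ)_{I_j}`. -/
def ipfj (x : Fin (N + 1) → ℝ) (f : ℝ → ℝ) (u : Fin N → Polynomial ℝ) (j : Fin N)
    (φ : Polynomial ℝ) : ℝ :=
  ∫ t in (x j.castSucc)..(x j.succ), f ((u j).eval t) * φ.eval t

/-- Boundary pairing `⟨g, φ⟩_{I_j}` for interface values `g`. -/
def bdj [NeZero N] (x : Fin (N + 1) → ℝ) (g : Fin N → ℝ) (j : Fin N) (φ : Polynomial ℝ) : ℝ :=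
  g j * φ.eval (x j.succ) - g (j - 1) * φ.eval (x j.castSucc)

/-- Membership in the space `V_h^k` of piecewise polynomials of degree at most `k`. -/
def memV (k : ℕ) (ω : Fin N → Polynomial ℝ) : Prop :=
  ∀ j, (ω j).degree ≤ (k : WithBot ℕ)

/-- `L⁻(ω, φ)`. -/
def Lm [NeZero N] (x : Fin (N + 1) → ℝ) (ω φ : Fin N → Polynomial ℝ) : ℝ :=
  ∑ j, (-(ipj x ω j (derivative (φ j))) + bdj x (trM x ω) j (φ j))

/-- `L⁺(ω, φ)`. -/
def Lp [NeZero N] (x : Fin (N + 1) → ℝ) (ω φ : Fin N → Polynomial ℝ) : ℝ :=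
  ∑ j, (-(ipj x ω j (derivative (φ j))) + bdj x (trP x ω) j (φ j))

/-- `L^c(ω, φ)`. -/
def Lc [NeZero N] (x : Fin (N + 1) → ℝ) (ω φ : Fin N → Polynomial ℝ) : ℝ :=
  ∑ j, (-(ipj x ω j (derivative (φ j))) + bdj x (trA x ω) j (φ j))

/-- Godunov numerical flux. -/
def godunov (f : ℝ → ℝ) (c d : ℝ) : ℝ :=
  if c < d then sInf (f '' Set.Icc c d) else sSup (f '' Set.Icc d c)

/-- Conservative numerical flux for `f(u) = u^p/p`, `F(u) = u^(p+1)/(p(p+1))`. -/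
def consFlux (p : ℕ) (c d : ℝ) : ℝ :=
  if c = d then c ^ p / (p : ℝ)
  else (d ^ (p + 1) / ((p : ℝ) * ((p : ℝ) + 1)) - c ^ (p + 1) / ((p : ℝ) * ((p : ℝ) + 1))) / (d - c)

/-- Dissipative (Godunov-flux) nonlinear form `N^d`. -/
def Nd [NeZero N] (x : Fin (N + 1) → ℝ) (f : ℝ → ℝ) (ω φ : Fin N → Polynomial ℝ) : ℝ :=
  ∑ j, (-(ipfj x f ω j (derivative (φ j)))
    + bdj x (fun i => godunov f (trM x ω i) (trP x ω i)) j (φ j))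

/-- Conservative-flux nonlinear form `N^c`. -/
def Nc [NeZero N] (x : Fin (N + 1) → ℝ) (p : ℕ) (ω φ : Fin N → Polynomial ℝ) : ℝ :=
  ∑ j, (-(ipfj x (fun w => w ^ p / (p : ℝ)) ω j (derivative (φ j)))
    + bdj x (fun i => consFlux p (trM x ω i) (trP x ω i)) j (φ j))

end FW

lemma poly_ibp (p q : Polynomial ℝ) (a b : ℝ) :
    (∫ t in a..b, p.eval t * (derivative q).eval t)
      + ∫ t in a..b, q.eval t * (derivative p).eval t
    = p.eval b * q.eval b - p.eval a * q.eval a := by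
  have h1 : (∫ t in a..b, (derivative (p * q)).eval t)
      = (p * q).eval b - (p * q).eval a := by
    apply intervalIntegral.integral_eq_sub_of_hasDerivAt
      (fun t _ => (p * q).hasDerivAt t)
    exact ((derivative (p * q)).continuous).intervalIntegrable a b
  have h2 : (∫ t in a..b, p.eval t * (derivative q).eval t)
      + ∫ t in a..b, q.eval t * (derivative p).eval t
      = ∫ t in a..b, (derivative (p * q)).eval t := by
    rw [← intervalIntegral.integral_add (f := fun t => p.eval t * (derivative q).eval t)
      (g := fun t => q.eval t * (derivative p).eval t)
      ((p.continuous.mul (derivative q).continuous).intervalIntegrable a b)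
      ((q.continuous.mul (derivative p).continuous).intervalIntegrable a b)]
    congr 1; funext t
    simp [Polynomial.derivative_mul]; ring
  rw [h2, h1]; simp

theorem stmt4 {N : ℕ} [NeZero N] (hN : 1 ≤ N) (a b : ℝ) (hab : a < b)
    (x : Fin (N + 1) → ℝ) (hx : StrictMono x) (hxa : x 0 = a) (hxb : x (Fin.last N) = b)
    (k : ℕ) (ω φ : Fin N → Polynomial ℝ)
    (hω : FW.memV k ω) (hφ : FW.memV k φ) :
    FW.Lm x ω φ + FW.Lm x φ ω = ∑ j : Fin N, FW.jmp x ω j * FW.jmp x φ j := by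
  classical
  set F : Fin N → ℝ := fun j => FW.trM x ω j * FW.trM x φ j with hF
  set G : Fin N → ℝ := fun j => FW.trP x ω j * FW.trP x φ j
      - FW.trM x ω j * FW.trP x φ j - FW.trM x φ j * FW.trP x ω j with hG
  have key : ∀ j : Fin N,
      (-(FW.ipj x ω j (derivative (φ j))) + FW.bdj x (FW.trM x ω) j (φ j))
      + (-(FW.ipj x φ j (derivative (ω j))) + FW.bdj x (FW.trM x φ) j (ω j))
      = F j + G (j - 1) := by
    intro j
    have hj : j - 1 + 1 = j := sub_add_cancel j 1
    have h := poly_ibp (ω j) (φ j) (x j.castSucc) (x j.succ)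
    have hPω : FW.trP x ω (j - 1) = (ω j).eval (x j.castSucc) := by
      simp [FW.trP, hj]
    have hPφ : FW.trP x φ (j - 1) = (φ j).eval (x j.castSucc) := by
      simp [FW.trP, hj]
    simp only [hF, hG, FW.ipj, FW.bdj, FW.trM, hPω, hPφ]
    nlinarith [h]
  have hshift : ∑ j : Fin N, G (j - 1) = ∑ j : Fin N, G j :=
    Fintype.sum_equiv (Equiv.subRight (1 : Fin N)) _ _ (fun j => rfl)
  calc FW.Lm x ω φ + FW.Lm x φ ω
      = ∑ j : Fin N, (F j + G (j - 1)) := by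
        rw [FW.Lm, FW.Lm, ← Finset.sum_add_distrib]
        exact Finset.sum_congr rfl fun j _ => key j
    _ = (∑ j : Fin N, F j) + ∑ j : Fin N, G (j - 1) := Finset.sum_add_distrib
    _ = ∑ j : Fin N, (F j + G j) := by rw [hshift, Finset.sum_add_distrib]
    _ = ∑ j : Fin N, FW.jmp x ω j * FW.jmp x φ j := by
        refine Finset.sum_congr rfl fun j _ => ?_
        simp only [hF, hG, FW.jmp]; ring
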